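/- Every join-semilattice with least element 0 that admits a basis (i.e. is a free B-module) is distributive: if x ≤ y ⊕ z then there exist y' ≤ y and z' ≤ z with x = y' ⊕ z'. -/
import Mathlib


def IsSemilatticeBasis {S : Type*} [SemilatticeSup S] [OrderBot S] (B : Set S) : Prop :=
  ∀ x : S, ∃! F : Finset S, ↑F ⊆ B ∧ x = F.sup id

/-- A join-semilattice with bottom admitting a basis is distributive. -/
theorem distributive_of_basis {S : Type*} [SemilatticeSup S] [OrderBot S]
    (B : Set S) (hB : IsSemilatticeBasis B) :
    ∀ x y z : S, x ≤ y ⊔ z → ∃ y' z' : S, y' ≤ y ∧ z' ≤ z ∧ x = y' ⊔ z' := by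
  classical
  intro x y z hxyz
  obtain ⟨Fx, ⟨hFxB, hFx⟩, _⟩ := hB x
  obtain ⟨Fy, ⟨hFyB, hFy⟩, _⟩ := hB y
  obtain ⟨Fz, ⟨hFzB, hFz⟩, _⟩ := hB z
  obtain ⟨G, ⟨_, _⟩, hGuniq⟩ := hB (y ⊔ z)
  have hyz : y ⊔ z = (Fy ∪ Fz).sup id := by
    rw [Finset.sup_union, ← hFy, ← hFz]
  have hyzB : ↑(Fy ∪ Fz) ⊆ B := by
    push_cast
    exact Set.union_subset hFyB hFzB
  have hall : y ⊔ z = (Fx ∪ (Fy ∪ Fz)).sup id := by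
    rw [Finset.sup_union, ← hFx, ← hyz]
    exact (sup_eq_right.mpr hxyz).symm
  have hallB : ↑(Fx ∪ (Fy ∪ Fz)) ⊆ B := by
    push_cast at hyzB ⊢
    exact Set.union_subset hFxB hyzB
  have heq : Fx ∪ (Fy ∪ Fz) = Fy ∪ Fz := by
    rw [hGuniq _ ⟨hallB, hall⟩, hGuniq _ ⟨hyzB, hyz⟩]
  have hsub : Fx ⊆ Fy ∪ Fz := by
    rw [← heq]; exact Finset.subset_union_left
  refine ⟨(Fx ∩ Fy).sup id, (Fx ∩ Fz).sup id, ?_, ?_, ?_⟩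
  · rw [hFy]; exact Finset.sup_mono Finset.inter_subset_right
  · rw [hFz]; exact Finset.sup_mono Finset.inter_subset_right
  · rw [← Finset.sup_union, ← Finset.inter_union_distrib_left,
      Finset.inter_eq_left.mpr hsub, hFx]
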